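/- Fix θ ∈ ℤ. A function E : ℤ → [0,∞) is an e-value for 𝒟_θ (i.e. ∑_n E(n) f_P(n) ≤ 1 for every P ∈ 𝒟_θ) if and only if there exist nondecreasing real sequences (ρ_n)_{n≥1} and (η_n)_{n≥1} with ρ_n ≤ n and η_n ≤ n for all n ≥ 1 and ρ_1 + η_1 ≥ 1, such that E(n) = ρ_{n−θ+1} − ρ_{n−θ} for all n > θ, E(θ) = ρ_1 + η_1 − 1, and E(n) = η_{θ−n+1} − η_{θ−n} for all n < θ. -/

import Mathlib

open MeasureTheory ENNReal Finset

def tset (θ : ℤ) (a b : ℕ) : Finset ℤ :=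
  ((Finset.range a).image fun k : ℕ => θ + (k:ℤ)) ∪
    ((Finset.range b).image fun k : ℕ => θ - 1 - (k:ℤ))

lemma mem_tset {θ : ℤ} {a b : ℕ} {n : ℤ} :
    n ∈ tset θ a b ↔ (θ ≤ n ∧ n < θ + a) ∨ (θ - b ≤ n ∧ n < θ) := by
  simp only [tset, Finset.mem_union, Finset.mem_image, Finset.mem_range]
  constructor
  · rintro (⟨k, hk, rfl⟩ | ⟨k, hk, rfl⟩) <;> [left; right] <;> omega
  · rintro (⟨h1, h2⟩ | ⟨h1, h2⟩)
    · exact Or.inl ⟨(n - θ).toNat, by omega, by omega⟩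
    · exact Or.inr ⟨(θ - 1 - n).toNat, by omega, by omega⟩

lemma disj_tset (θ : ℤ) (a b : ℕ) :
    Disjoint ((Finset.range a).image fun k : ℕ => θ + (k:ℤ))
      ((Finset.range b).image fun k : ℕ => θ - 1 - (k:ℤ)) := by
  rw [Finset.disjoint_left]
  simp only [Finset.mem_image, Finset.mem_range]
  rintro x ⟨k, hk, rfl⟩ ⟨j, hj, hx⟩
  omega

lemma sum_tset {α : Type*} [AddCommMonoid α] (θ : ℤ) (a b : ℕ) (w : ℤ → α) :
    ∑ n ∈ tset θ a b, w n
      = ∑ k ∈ Finset.range a, w (θ + (k:ℤ)) + ∑ k ∈ Finset.range b, w (θ - 1 - (k:ℤ)) := by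
  rw [tset, Finset.sum_union (disj_tset θ a b),
    Finset.sum_image (by intro x _ y _ h; dsimp only at h; omega),
    Finset.sum_image (by intro x _ y _ h; dsimp only at h; omega)]

lemma card_tset (θ : ℤ) (a b : ℕ) : (tset θ a b).card = a + b := by
  rw [tset, Finset.card_union_of_disjoint (disj_tset θ a b),
    Finset.card_image_of_injOn (by intro x _ y _ h; dsimp only at h; omega),
    Finset.card_image_of_injOn (by intro x _ y _ h; dsimp only at h; omega),
    Finset.card_range, Finset.card_range]

lemma key_slack (ρ η g h : ℕ → ℝ)
    (hρ : ∀ n : ℕ, 1 ≤ n → ρ n ≤ n) (hη : ∀ n : ℕ, 1 ≤ n → η n ≤ n)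
    (hg : ∀ k, g (k+1) ≤ g k) (hh : ∀ k, h (k+1) ≤ h k)
    (hgh : h 0 = g 0) (M : ℕ) :
    (ρ 1 + η 1 - 1) * g 0
      + ∑ k ∈ Finset.range M, (ρ (k+2) - ρ (k+1)) * g (k+1)
      + ∑ k ∈ Finset.range M, (η (k+2) - η (k+1)) * h (k+1)
    ≤ ∑ k ∈ Finset.range (M+1), g k + ∑ k ∈ Finset.range M, h (k+1)
      + (ρ (M+1) - ((M:ℝ)+1)) * g M + (η (M+1) - ((M:ℝ)+1)) * h M := by
  induction M with
  | zero => simp [hgh]; nlinarith [hgh]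
  | succ M ih =>
      rw [Finset.sum_range_succ, Finset.sum_range_succ,
        Finset.sum_range_succ (f := g) (n := M+1),
        Finset.sum_range_succ (f := fun k => h (k+1)) (n := M)]
      have hρ' : ρ (M+1) - ((M:ℝ)+1) ≤ 0 := by
        have := hρ (M+1) (by omega); push_cast at this ⊢; linarith
      have hη' : η (M+1) - ((M:ℝ)+1) ≤ 0 := by
        have := hη (M+1) (by omega); push_cast at this ⊢; linarith
      have h1 : (ρ (M+1) - ((M:ℝ)+1)) * g M ≤ (ρ (M+1) - ((M:ℝ)+1)) * g (M+1) :=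
        mul_le_mul_of_nonpos_left (hg M) hρ'
      have h2 : (η (M+1) - ((M:ℝ)+1)) * h M ≤ (η (M+1) - ((M:ℝ)+1)) * h (M+1) :=
        mul_le_mul_of_nonpos_left (hh M) hη'
      push_cast
      push_cast at ih
      linarith [ih, h1, h2]

lemma key_ineq (ρ η g h : ℕ → ℝ)
    (hρ : ∀ n : ℕ, 1 ≤ n → ρ n ≤ n) (hη : ∀ n : ℕ, 1 ≤ n → η n ≤ n)
    (hg : ∀ k, g (k+1) ≤ g k) (hh : ∀ k, h (k+1) ≤ h k)
    (hg0 : ∀ k, 0 ≤ g k) (hh0 : ∀ k, 0 ≤ h k)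
    (hgh : h 0 = g 0) (M : ℕ) :
    (ρ 1 + η 1 - 1) * g 0
      + ∑ k ∈ Finset.range M, (ρ (k+2) - ρ (k+1)) * g (k+1)
      + ∑ k ∈ Finset.range M, (η (k+2) - η (k+1)) * h (k+1)
    ≤ ∑ k ∈ Finset.range (M+1), g k + ∑ k ∈ Finset.range M, h (k+1) := by
  have := key_slack ρ η g h hρ hη hg hh hgh M
  have hρ' : ρ (M+1) - ((M:ℝ)+1) ≤ 0 := by
    have := hρ (M+1) (by omega); push_cast at this ⊢; linarith
  have hη' : η (M+1) - ((M:ℝ)+1) ≤ 0 := by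
    have := hη (M+1) (by omega); push_cast at this ⊢; linarith
  nlinarith [mul_nonpos_of_nonpos_of_nonneg hρ' (hg0 M),
    mul_nonpos_of_nonpos_of_nonneg hη' (hh0 M)]

/-- `𝒟_θ`: θ-unimodal probability distributions on `ℤ`. -/
def UnimodalClass (θ : ℤ) : Set (Measure ℤ) :=
  {P | IsProbabilityMeasure P ∧ (∀ n : ℤ, n ≤ θ → P {n - 1} ≤ P {n}) ∧
    (∀ n : ℤ, θ ≤ n → P {n + 1} ≤ P {n})}

/-- **polar of `𝒟_θ`.** `E : ℤ → [0,∞)` is an e-value for `𝒟_θ` iff there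
exist nondecreasing real sequences `(ρ_n)_{n≥1}`, `(η_n)_{n≥1}` with `ρ_n ≤ n`, `η_n ≤ n`
for all `n ≥ 1` and `ρ_1 + η_1 ≥ 1`, such that `E(n) = ρ_{n−θ+1} − ρ_{n−θ}` for `n > θ`,
`E(θ) = ρ_1 + η_1 − 1`, and `E(n) = η_{θ−n+1} − η_{θ−n}` for `n < θ`. -/
theorem stmt4 (θ : ℤ) (E : ℤ → NNReal) :
    (∀ P ∈ UnimodalClass θ, ∑' n : ℤ, (E n : ℝ≥0∞) * P {n} ≤ 1) ↔
      ∃ ρ η : ℕ → ℝ,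
        (∀ n : ℕ, 1 ≤ n → ρ n ≤ ρ (n + 1)) ∧ (∀ n : ℕ, 1 ≤ n → η n ≤ η (n + 1)) ∧
        (∀ n : ℕ, 1 ≤ n → ρ n ≤ n) ∧ (∀ n : ℕ, 1 ≤ n → η n ≤ n) ∧
        1 ≤ ρ 1 + η 1 ∧
        (∀ n : ℤ, θ < n → (E n : ℝ) = ρ ((n - θ).toNat + 1) - ρ ((n - θ).toNat)) ∧
        (E θ : ℝ) = ρ 1 + η 1 - 1 ∧
        (∀ n : ℤ, n < θ → (E n : ℝ) = η ((θ - n).toNat + 1) - η ((θ - n).toNat)) := by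
  constructor
  · -- forward direction
    intro hE
    set S : ℕ → ℝ := fun a => ∑ k ∈ Finset.range a, ((E (θ + (k:ℤ) + 1) : ℝ)) with hS
    set T : ℕ → ℝ := fun b => ∑ k ∈ Finset.range b, ((E (θ - 1 - (k:ℤ)) : ℝ)) with hT
    have hSsucc : ∀ a : ℕ, S (a+1) = S a + (E (θ + (a:ℤ) + 1) : ℝ) := by
      intro a; simp only [hS]; rw [Finset.sum_range_succ]
    have hTsucc : ∀ b : ℕ, T (b+1) = T b + (E (θ - 1 - (b:ℤ)) : ℝ) := by
      intro b; simp only [hT]; rw [Finset.sum_range_succ]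
    have hS0 : S 0 = 0 := by simp [hS]
    have hT0 : T 0 = 0 := by simp [hT]
    have hC : ∀ a b : ℕ, (E θ : ℝ) + S a + T b ≤ (a:ℝ) + b + 1 := by
      intro a b
      set t := tset θ (a+1) b with ht
      set c : ℝ≥0∞ := ((a+b+1 : ℕ) : ℝ≥0∞)⁻¹ with hc
      set P : Measure ℤ := c • Measure.count.restrict ↑t with hPdef
      have hcne : ((a+b+1 : ℕ) : ℝ≥0∞) ≠ 0 := by simp
      have hcnt : ((a+b+1 : ℕ) : ℝ≥0∞) ≠ ⊤ := by simp
      have hPs : ∀ n : ℤ, P {n} = if n ∈ t then c else 0 := by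
        intro n
        rw [hPdef]
        simp only [Measure.smul_apply, smul_eq_mul,
          Measure.restrict_apply (measurableSet_singleton n)]
        by_cases hn : n ∈ t
        · rw [Set.inter_eq_self_of_subset_left (by simpa using hn),
            Measure.count_singleton]
          simp [hn]
        · rw [Set.singleton_inter_eq_empty.2 (by simpa using hn), measure_empty]
          simp [hn]
      have hProb : IsProbabilityMeasure P := by
        constructor
        rw [hPdef]
        simp only [Measure.smul_apply, smul_eq_mul]
        rw [Measure.restrict_apply MeasurableSet.univ, Set.univ_inter,
          Measure.count_apply_finset, card_tset]
        rw [hc, show (a+1+b) = (a+b+1) by omega]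
        exact ENNReal.inv_mul_cancel hcne hcnt
      have hmono1 : ∀ n : ℤ, n ≤ θ → P {n - 1} ≤ P {n} := by
        intro n hn
        rw [hPs, hPs]
        by_cases h1 : n - 1 ∈ t
        · have h2 : n ∈ t := mem_tset.2 (by have := mem_tset.1 h1; push_cast at this ⊢; omega)
          simp [h1, h2]
        · simp [h1]
      have hmono2 : ∀ n : ℤ, θ ≤ n → P {n + 1} ≤ P {n} := by
        intro n hn
        rw [hPs, hPs]
        by_cases h1 : n + 1 ∈ t
        · have h2 : n ∈ t := mem_tset.2 (by have := mem_tset.1 h1; push_cast at this ⊢; omega)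
          simp [h1, h2]
        · simp [h1]
      have htsum : ∑' n : ℤ, (E n : ℝ≥0∞) * P {n} = c * ∑ n ∈ t, (E n : ℝ≥0∞) := by
        rw [tsum_eq_sum (s := t) (fun n hn => by rw [hPs]; simp [hn]), Finset.mul_sum]
        exact Finset.sum_congr rfl (fun n hn => by rw [hPs]; simp [hn]; ring)
      have hle := hE P ⟨hProb, hmono1, hmono2⟩
      rw [htsum, hc, ENNReal.inv_mul_le_iff hcne hcnt, mul_one] at hle
      have hreal : ∑ n ∈ t, (E n : ℝ) ≤ ((a+b+1:ℕ) : ℝ) := by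
        have h2 := ENNReal.toReal_mono (by simp) hle
        rw [ENNReal.toReal_sum (fun n _ => ENNReal.coe_ne_top), ENNReal.toReal_natCast] at h2
        simpa using h2
      have hdec : ∑ n ∈ t, (E n : ℝ) = (E θ : ℝ) + S a + T b := by
        rw [ht, sum_tset θ (a+1) b (fun n => (E n : ℝ)),
          Finset.sum_range_succ' (fun k : ℕ => ((E (θ + (k:ℤ)) : ℝ))) a]
        have e1 : ∀ k : ℕ, ((E (θ + ((k:ℕ)+1 : ℕ)) : ℝ)) = (E (θ + (k:ℤ) + 1) : ℝ) := by
          intro k; congr 1; push_cast; ring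
        rw [Finset.sum_congr rfl (fun k _ => e1 k)]
        simp only [Nat.cast_zero, add_zero, hS, hT]
        ring
      rw [hdec] at hreal
      push_cast at hreal
      linarith
    have hEnn : ∀ n : ℤ, (0:ℝ) ≤ (E n : ℝ) := fun n => (E n).coe_nonneg
    have hbdd : BddBelow (Set.range fun a : ℕ => ((a:ℝ) + 1 - S a)) := by
      refine ⟨(E θ : ℝ), ?_⟩
      rintro x ⟨a, rfl⟩
      dsimp only
      have := hC a 0
      rw [hT0] at this
      push_cast at this
      linarith
    set A : ℝ := ⨅ a : ℕ, ((a:ℝ) + 1 - S a) with hA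
    refine ⟨fun n => A + S (n-1), fun n => (1 + (E θ:ℝ) - A) + T (n-1),
      ?_, ?_, ?_, ?_, ?_, ?_, ?_, ?_⟩
    · intro n hn
      obtain ⟨m, rfl⟩ : ∃ m, n = m + 1 := ⟨n-1, by omega⟩
      simp only [Nat.add_sub_cancel]
      rw [hSsucc m]
      linarith [hEnn (θ + (m:ℤ) + 1)]
    · intro n hn
      obtain ⟨m, rfl⟩ : ∃ m, n = m + 1 := ⟨n-1, by omega⟩
      simp only [Nat.add_sub_cancel]
      rw [hTsucc m]
      linarith [hEnn (θ - 1 - (m:ℤ))]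
    · intro n hn
      obtain ⟨m, rfl⟩ : ∃ m, n = m + 1 := ⟨n-1, by omega⟩
      simp only [Nat.add_sub_cancel]
      have := ciInf_le hbdd m
      rw [← hA] at this
      push_cast
      linarith
    · intro n hn
      obtain ⟨m, rfl⟩ : ∃ m, n = m + 1 := ⟨n-1, by omega⟩
      simp only [Nat.add_sub_cancel]
      have hAge : (E θ : ℝ) + T m - (m:ℝ) ≤ A := by
        rw [hA]
        refine le_ciInf fun a => ?_
        have := hC a m
        linarith
      push_cast
      linarith
    · simp only [Nat.sub_self, hS0, hT0]
      have := hEnn θ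
      linarith
    · intro n hn
      obtain ⟨j, hj⟩ : ∃ j : ℕ, (n - θ).toNat = j + 1 := ⟨(n-θ).toNat - 1, by omega⟩
      rw [hj]
      simp only [Nat.add_sub_cancel]
      rw [hSsucc j]
      have harg : θ + (j:ℤ) + 1 = n := by omega
      rw [harg]; ring
    · simp only [Nat.sub_self, hS0, hT0]
      ring
    · intro n hn
      obtain ⟨j, hj⟩ : ∃ j : ℕ, (θ - n).toNat = j + 1 := ⟨(θ-n).toNat - 1, by omega⟩
      rw [hj]
      simp only [Nat.add_sub_cancel]
      rw [hTsucc j]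
      have harg : θ - 1 - (j:ℤ) = n := by omega
      rw [harg]; ring
  · -- reverse direction
    rintro ⟨ρ, η, hρm, hηm, hρle, hηle, h1, hEr, hEθ, hEl⟩ P hP
    obtain ⟨hProb, hL, hR⟩ := hP
    rw [ENNReal.tsum_eq_iSup_sum]
    refine iSup_le fun s => ?_
    set N := s.sup (fun n => (n - θ).natAbs) with hN
    set t := tset θ (N+2) (N+1) with ht
    have hsub : s ⊆ t := by
      intro n hn
      have hle : (n - θ).natAbs ≤ N := Finset.le_sup (f := fun n => (n - θ).natAbs) hn
      rw [mem_tset]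
      push_cast
      omega
    refine le_trans (Finset.sum_le_sum_of_subset hsub) ?_
    set f : ℤ → ℝ := fun n => (P {n}).toReal with hf
    have hfin : ∀ n : ℤ, P {n} ≠ ∞ := fun n => (measure_lt_top P _).ne
    have hterm : ∀ n : ℤ, (E n : ℝ≥0∞) * P {n} = ENNReal.ofReal ((E n : ℝ) * f n) := by
      intro n
      rw [ENNReal.ofReal_mul (E n).coe_nonneg, ENNReal.ofReal_coe_nnreal,
        ENNReal.ofReal_toReal (hfin n)]
    have hsum_of : ∑ n ∈ t, (E n : ℝ≥0∞) * P {n}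
        = ENNReal.ofReal (∑ n ∈ t, (E n : ℝ) * f n) := by
      rw [ENNReal.ofReal_sum_of_nonneg
        (fun n _ => mul_nonneg (E n).coe_nonneg ENNReal.toReal_nonneg)]
      exact Finset.sum_congr rfl fun n _ => hterm n
    rw [hsum_of]
    rw [ENNReal.ofReal_le_one]
    -- real goal
    set g : ℕ → ℝ := fun k => f (θ + (k:ℤ)) with hg
    set h : ℕ → ℝ := fun k => f (θ - (k:ℤ)) with hh
    have hgmono : ∀ k : ℕ, g (k+1) ≤ g k := by
      intro k
      have := hR (θ + (k:ℤ)) (by omega)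
      have harg : θ + ((k:ℕ)+1 : ℕ) = θ + (k:ℤ) + 1 := by push_cast; ring
      simp only [hg, hf, harg]
      exact ENNReal.toReal_mono (hfin _) this
    have hhmono : ∀ k : ℕ, h (k+1) ≤ h k := by
      intro k
      have := hL (θ - (k:ℤ)) (by omega)
      have harg : θ - ((k:ℕ)+1 : ℕ) = θ - (k:ℤ) - 1 := by push_cast; ring
      simp only [hh, hf, harg]
      exact ENNReal.toReal_mono (hfin _) this
    have hg0 : ∀ k, 0 ≤ g k := fun k => ENNReal.toReal_nonneg
    have hh0 : ∀ k, 0 ≤ h k := fun k => ENNReal.toReal_nonneg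
    have hgh : h 0 = g 0 := by simp [hg, hh]
    have hmass : ∑ k ∈ Finset.range (N+2), g k + ∑ k ∈ Finset.range (N+1), h (k+1) ≤ 1 := by
      have e1 : ∀ k : ℕ, h (k+1) = f (θ - 1 - (k:ℤ)) := by
        intro k; simp only [hh]; congr 1; push_cast; ring
      rw [Finset.sum_congr rfl (fun k _ => e1 k)]
      have e2 : ∑ k ∈ Finset.range (N+2), g k + ∑ k ∈ Finset.range (N+1), f (θ - 1 - (k:ℤ))
          = ∑ n ∈ t, f n := by
        rw [ht, sum_tset θ (N+2) (N+1) f]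
      rw [e2]
      have e3 : ∑ n ∈ t, f n = (P ↑t).toReal := by
        rw [hf]
        rw [← ENNReal.toReal_sum (fun n _ => hfin n)]
        congr 1
        have := sum_measure_preimage_singleton (μ := P) t
          (f := fun n : ℤ => n) (fun y _ => measurableSet_singleton y)
        simpa using this
      rw [e3]
      have : P ↑t ≤ 1 := prob_le_one
      have h4 := ENNReal.toReal_mono (by norm_num) this
      simpa using h4
    -- rewrite the sum in the form of key_ineq
    have hdecomp : ∑ n ∈ t, (E n : ℝ) * f n
        = (ρ 1 + η 1 - 1) * g 0
          + ∑ k ∈ Finset.range (N+1), (ρ (k+2) - ρ (k+1)) * g (k+1)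
          + ∑ k ∈ Finset.range (N+1), (η (k+2) - η (k+1)) * h (k+1) := by
      rw [ht, sum_tset θ (N+2) (N+1) (fun n => (E n : ℝ) * f n),
        Finset.sum_range_succ' (fun k : ℕ => (E (θ + (k:ℤ)) : ℝ) * f (θ + (k:ℤ))) (N+1)]
      have e1 : ∀ k : ℕ, (E (θ + ((k:ℕ)+1 : ℕ)) : ℝ) * f (θ + ((k:ℕ)+1 : ℕ))
          = (ρ (k+2) - ρ (k+1)) * g (k+1) := by
        intro k
        have harg : θ + ((k:ℕ)+1 : ℕ) = θ + (k:ℤ) + 1 := by push_cast; ring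
        have hgt : θ < θ + (k:ℤ) + 1 := by omega
        have hE := hEr (θ + (k:ℤ) + 1) hgt
        have htn : (θ + (k:ℤ) + 1 - θ).toNat = k + 1 := by omega
        rw [htn] at hE
        rw [harg, hE]
        simp only [hg]
        congr 2
        omega
      have e2 : ∀ k : ℕ, (E (θ - 1 - (k:ℤ)) : ℝ) * f (θ - 1 - (k:ℤ))
          = (η (k+2) - η (k+1)) * h (k+1) := by
        intro k
        have hlt : θ - 1 - (k:ℤ) < θ := by omega
        have hE := hEl (θ - 1 - (k:ℤ)) hlt
        have htn : (θ - (θ - 1 - (k:ℤ))).toNat = k + 1 := by omega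
        rw [htn] at hE
        have hfarg : f (θ - 1 - (k:ℤ)) = h (k+1) := by
          simp only [hh]; congr 1; push_cast; ring
        rw [hE, hfarg]
      rw [Finset.sum_congr rfl (fun k _ => e1 k),
        Finset.sum_congr rfl (fun k _ => e2 k)]
      have e0 : (E (θ + ((0:ℕ):ℤ)) : ℝ) * f (θ + ((0:ℕ):ℤ)) = (ρ 1 + η 1 - 1) * g 0 := by
        simp only [Nat.cast_zero, add_zero, hEθ, hg]
      rw [e0]
      ring
    rw [hdecomp]
    calc (ρ 1 + η 1 - 1) * g 0
          + ∑ k ∈ Finset.range (N+1), (ρ (k+2) - ρ (k+1)) * g (k+1)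
          + ∑ k ∈ Finset.range (N+1), (η (k+2) - η (k+1)) * h (k+1)
        ≤ ∑ k ∈ Finset.range (N+2), g k + ∑ k ∈ Finset.range (N+1), h (k+1) :=
          key_ineq ρ η g h hρle hηle hgmono hhmono hg0 hh0 hgh (N+1)
      _ ≤ 1 := hmass
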